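/- arXiv:1701.06139 — 2 statements merged into one kernel-verified Lean document; each statement's English description precedes it below -/
import Mathlib

section
/- Let G be an r-uniform hypergraph on t vertices. If λ(G) > λ(K_{t-1}^{(r)}), then G is dense. -/
structure UHypergraph (r : ℕ) where
  verts : Finset ℕ
  edges : Finset (Finset ℕ)
  edge_sub : ∀ e ∈ edges, e ⊆ verts
  edge_card : ∀ e ∈ edges, e.card = r

namespace UHypergraph

variable {r : ℕ}

/-- The polynomial value `λ(E, x) = Σ_{e ∈ E} Π_{i ∈ e} x_i`. -/
def polyValue (E : Finset (Finset ℕ)) (x : ℕ → ℝ) : ℝ :=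
  ∑ e ∈ E, ∏ i ∈ e, x i

/-- A legal weighting: nonnegative, supported on the vertex set, summing to 1. -/
def LegalWeighting (G : UHypergraph r) (x : ℕ → ℝ) : Prop :=
  (∀ i, 0 ≤ x i) ∧ (∀ i ∉ G.verts, x i = 0) ∧ ∑ i ∈ G.verts, x i = 1

/-- The Lagrangian of a hypergraph. -/
noncomputable def lagrangian (G : UHypergraph r) : ℝ :=
  sSup {l : ℝ | ∃ x, G.LegalWeighting x ∧ l = polyValue G.edges x}

/-- An optimum weighting attains the Lagrangian. -/
def IsOptimal (G : UHypergraph r) (x : ℕ → ℝ) : Prop :=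
  G.LegalWeighting x ∧ polyValue G.edges x = G.lagrangian

def IsSubgraph (H G : UHypergraph r) : Prop :=
  H.verts ⊆ G.verts ∧ H.edges ⊆ G.edges

def IsProperSubgraph (H G : UHypergraph r) : Prop :=
  H.IsSubgraph G ∧ (H.verts ≠ G.verts ∨ H.edges ≠ G.edges)

/-- A hypergraph is dense if every proper subgraph has strictly smaller Lagrangian. -/
def Dense (G : UHypergraph r) : Prop :=
  ∀ H : UHypergraph r, H.IsProperSubgraph G → H.lagrangian < G.lagrangian

/-- The link `E_i` of a vertex `i`. -/
def link (G : UHypergraph r) (i : ℕ) : Finset (Finset ℕ) :=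
  (G.edges.filter fun e => i ∈ e).image fun e => e.erase i

/-- The pair link `E_{ij}`. -/
def pairLink (G : UHypergraph r) (i j : ℕ) : Finset (Finset ℕ) :=
  (G.edges.filter fun e => i ∈ e ∧ j ∈ e).image fun e => (e.erase i).erase j

/-- `E_{i \ j} = E_i ∩ E_j^c`. -/
def linkDiff (G : UHypergraph r) (i j : ℕ) : Finset (Finset ℕ) :=
  (G.link i).filter fun A => j ∉ A ∧ insert j A ∉ G.edges

/-- `G` contains a clique of order `t`. -/
def HasClique (G : UHypergraph r) (t : ℕ) : Prop :=
  ∃ S ⊆ G.verts, S.card = t ∧ S.powersetCard r ⊆ G.edges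

/-- `G` is left-compressed: replacing a vertex of an edge by a smaller vertex
not in the edge yields an edge. -/
def LeftCompressed (G : UHypergraph r) : Prop :=
  ∀ e ∈ G.edges, ∀ i j : ℕ, i ∈ G.verts → i < j → j ∈ e → i ∉ e →
    insert i (e.erase j) ∈ G.edges

/-- The subgraph induced on a vertex set `S`. -/
def induce (G : UHypergraph r) (S : Finset ℕ) : UHypergraph r :=
  ⟨G.verts ∩ S, G.edges.filter fun e => e ⊆ S,
   fun e he => Finset.subset_inter (G.edge_sub e (Finset.mem_filter.mp he).1)
     (Finset.mem_filter.mp he).2,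
   fun e he => G.edge_card e (Finset.mem_filter.mp he).1⟩

end UHypergraph

/-- The complete `r`-graph on vertex set `{1, …, t}`. -/
def completeHG (t r : ℕ) : UHypergraph r :=
  ⟨Finset.Icc 1 t, (Finset.Icc 1 t).powersetCard r,
   fun _ he => (Finset.mem_powersetCard.mp he).1,
   fun _ he => (Finset.mem_powersetCard.mp he).2⟩

/-- `H₁ = [t-1]^{(3)} \ {(t-3)(t-2)(t-1)}`. -/
def H1 (t : ℕ) : UHypergraph 3 :=
  ⟨Finset.Icc 1 (t-1), (completeHG (t-1) 3).edges.erase {t-3, t-2, t-1},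
   fun e he => (completeHG (t-1) 3).edge_sub e (Finset.mem_of_mem_erase he),
   fun e he => (completeHG (t-1) 3).edge_card e (Finset.mem_of_mem_erase he)⟩


namespace UHypergraph

lemma polyValue_nonneg' (E : Finset (Finset ℕ)) {x : ℕ → ℝ} (hx : ∀ i, 0 ≤ x i) :
    0 ≤ polyValue E x :=
  Finset.sum_nonneg fun e _ => Finset.prod_nonneg fun i _ => hx i

lemma weight_le_one' (G : UHypergraph r) {x : ℕ → ℝ} (hx : G.LegalWeighting x) (i : ℕ) :
    x i ≤ 1 := by
  obtain ⟨h0, hs, hsum⟩ := hx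
  by_cases hi : i ∈ G.verts
  · calc x i ≤ ∑ j ∈ G.verts, x j := Finset.single_le_sum (fun j _ => h0 j) hi
    _ = 1 := hsum
  · simp [hs i hi]

lemma polyValue_le_card' (G : UHypergraph r) {x : ℕ → ℝ} (hx : G.LegalWeighting x) :
    polyValue G.edges x ≤ G.edges.card := by
  unfold polyValue
  calc ∑ e ∈ G.edges, ∏ i ∈ e, x i ≤ ∑ e ∈ G.edges, 1 := by
        apply Finset.sum_le_sum
        intro e _
        exact Finset.prod_le_one (fun i _ => hx.1 i) (fun i _ => weight_le_one' G hx i)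
    _ = G.edges.card := by simp

lemma bddAbove_set' (G : UHypergraph r) :
    BddAbove {l : ℝ | ∃ x, G.LegalWeighting x ∧ l = polyValue G.edges x} := by
  refine ⟨G.edges.card, fun l hl => ?_⟩
  obtain ⟨x, hx, rfl⟩ := hl
  exact polyValue_le_card' G hx

lemma le_lagrangian' (G : UHypergraph r) {x : ℕ → ℝ} (hx : G.LegalWeighting x) :
    polyValue G.edges x ≤ G.lagrangian :=
  le_csSup (bddAbove_set' G) ⟨x, hx, rfl⟩

lemma lagrangian_nonneg' (G : UHypergraph r) : 0 ≤ G.lagrangian := by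
  rcases Set.eq_empty_or_nonempty
      {l : ℝ | ∃ x, G.LegalWeighting x ∧ l = polyValue G.edges x} with hS | ⟨l, x, hx, rfl⟩
  · simp [lagrangian, hS, Real.sSup_empty]
  · exact le_trans (polyValue_nonneg' _ hx.1) (le_lagrangian' G hx)

lemma lagrangian_le' (G : UHypergraph r) {c : ℝ} (hc : 0 ≤ c)
    (hb : ∀ x, G.LegalWeighting x → polyValue G.edges x ≤ c) : G.lagrangian ≤ c := by
  apply Real.sSup_le _ hc
  rintro l ⟨x, hx, rfl⟩
  exact hb x hx

lemma exists_isOptimal' (G : UHypergraph r) (hV : G.verts.Nonempty) :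
    ∃ x, G.IsOptimal x := by
  classical
  set S : Set (ℕ → ℝ) := {x | G.LegalWeighting x} with hSdef
  have hsub : S ⊆ Set.pi Set.univ fun _ : ℕ => Set.Icc (0:ℝ) 1 := by
    intro x hx i _
    exact ⟨hx.1 i, weight_le_one' G hx i⟩
  have hclosed : IsClosed S := by
    have hSeq : S = {x : ℕ → ℝ | ∀ i, 0 ≤ x i} ∩
        ({x : ℕ → ℝ | ∀ i ∉ G.verts, x i = 0} ∩ {x : ℕ → ℝ | ∑ i ∈ G.verts, x i = 1}) := by
      ext x
      simp [hSdef, LegalWeighting, Set.mem_inter_iff, and_assoc]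
    rw [hSeq]
    refine IsClosed.inter ?_ (IsClosed.inter ?_ ?_)
    · have : {x : ℕ → ℝ | ∀ i, 0 ≤ x i} = ⋂ i, {x : ℕ → ℝ | 0 ≤ x i} := by
        ext x; simp
      rw [this]
      exact isClosed_iInter fun i => isClosed_le continuous_const (continuous_apply i)
    · have : {x : ℕ → ℝ | ∀ i ∉ G.verts, x i = 0}
          = ⋂ i ∈ {i : ℕ | i ∉ G.verts}, {x : ℕ → ℝ | x i = 0} := by
        ext x; simp
      rw [this]
      exact isClosed_biInter fun i _ => isClosed_eq (continuous_apply i) continuous_const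
    · exact isClosed_eq (by fun_prop) continuous_const
  have hcompact : IsCompact S :=
    IsCompact.of_isClosed_subset (isCompact_univ_pi fun _ => isCompact_Icc) hclosed hsub
  have hcont : Continuous fun x : ℕ → ℝ => polyValue G.edges x := by
    unfold polyValue
    fun_prop
  obtain ⟨v, hv⟩ := hV
  have hx0 : (fun i => if i = v then (1:ℝ) else 0) ∈ S := by
    refine ⟨fun i => by positivity, fun i hi => ?_, ?_⟩
    · have : i ≠ v := fun hiv => hi (hiv ▸ hv)
      simp [this]
    · simp [Finset.sum_ite_eq' G.verts v (fun _ => (1:ℝ)), hv]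
  have himg : {l : ℝ | ∃ x, G.LegalWeighting x ∧ l = polyValue G.edges x}
      = (fun x => polyValue G.edges x) '' S := by
    ext l
    constructor
    · rintro ⟨x, hx, rfl⟩; exact ⟨x, hx, rfl⟩
    · rintro ⟨x, hx, rfl⟩; exact ⟨x, hx, rfl⟩
  have hmem : G.lagrangian ∈ (fun x => polyValue G.edges x) '' S := by
    rw [lagrangian, himg]
    exact (hcompact.image hcont).sSup_mem ⟨_, Set.mem_image_of_mem _ hx0⟩
  obtain ⟨x, hx, hval⟩ := hmem
  exact ⟨x, hx, hval⟩

end UHypergraph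

open UHypergraph in
lemma polyValue_le_complete {r s : ℕ} (V : Finset ℕ) (E : Finset (Finset ℕ))
    (hE : ∀ e ∈ E, e ⊆ V) (hcard : ∀ e ∈ E, e.card = r)
    {x : ℕ → ℝ} (hx0 : ∀ i, 0 ≤ x i) (hxs : ∀ i ∉ V, x i = 0)
    (hsum : ∑ i ∈ V, x i = 1) (hVs : V.card ≤ s) :
    polyValue E x ≤ (completeHG s r).lagrangian := by
  classical
  set f : ℕ → ℕ := fun n => if h : n ∈ V then ((V.equivFin ⟨n, h⟩ : Fin V.card) : ℕ) + 1 else 0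
    with hf
  have hfmem : ∀ i ∈ V, f i ∈ Finset.Icc 1 s := by
    intro i hi
    simp only [hf, dif_pos hi, Finset.mem_Icc]
    have := (V.equivFin ⟨i, hi⟩).2
    omega
  have hfeq : ∀ a (ha : a ∈ V), f a = ((V.equivFin ⟨a, ha⟩ : Fin V.card) : ℕ) + 1 :=
    fun a ha => dif_pos ha
  have hfinj : Set.InjOn f V := by
    intro a ha b hb hab
    rw [hfeq a ha, hfeq b hb] at hab
    have h1 : V.equivFin ⟨a, ha⟩ = V.equivFin ⟨b, hb⟩ := by
      apply Fin.ext; omega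
    have h2 := V.equivFin.injective h1
    exact Subtype.ext_iff.mp h2
  set y : ℕ → ℝ := fun m => ∑ i ∈ V.filter fun i => f i = m, x i with hy
  have hyx : ∀ i ∈ V, y (f i) = x i := by
    intro i hi
    have hfil : V.filter (fun j => f j = f i) = {i} := by
      ext j
      simp only [Finset.mem_filter, Finset.mem_singleton]
      constructor
      · rintro ⟨hj, hfj⟩; exact hfinj hj hi hfj
      · rintro rfl; exact ⟨hi, rfl⟩
    simp [hy, hfil]
  have hy0 : ∀ m, 0 ≤ y m := fun m => Finset.sum_nonneg fun i _ => hx0 i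
  have hyleg : (completeHG s r).LegalWeighting y := by
    refine ⟨hy0, ?_, ?_⟩
    · intro m hm
      have hfil : V.filter (fun i => f i = m) = ∅ := by
        rw [Finset.filter_eq_empty_iff]
        intro i hi hfi
        exact hm (hfi ▸ hfmem i hi)
      simp [hy, hfil]
    · show ∑ m ∈ Finset.Icc 1 s, y m = 1
      calc ∑ m ∈ Finset.Icc 1 s, ∑ i ∈ V.filter fun i => f i = m, x i
          = ∑ i ∈ V, x i := Finset.sum_fiberwise_of_maps_to hfmem _
        _ = 1 := hsum
  have himg_edges : ∀ e ∈ E, e.image f ∈ (completeHG s r).edges := by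
    intro e he
    refine Finset.mem_powersetCard.mpr ⟨?_, ?_⟩
    · intro j hj
      obtain ⟨i, hi, rfl⟩ := Finset.mem_image.mp hj
      exact hfmem i (hE e he hi)
    · rw [Finset.card_image_of_injOn (hfinj.mono (Finset.coe_subset.mpr (hE e he)))]
      exact hcard e he
  have hmem_sub : ∀ e1 ∈ E, ∀ e2 ∈ E, e1.image f ⊆ e2.image f → e1 ⊆ e2 := by
    intro e1 h1 e2 h2 hsub a ha
    obtain ⟨b, hb, hba⟩ := Finset.mem_image.mp (hsub (Finset.mem_image_of_mem f ha))
    rwa [hfinj (hE e2 h2 hb) (hE e1 h1 ha) hba] at hb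
  have hval : polyValue E x = ∑ e ∈ E.image (fun e => e.image f), ∏ j ∈ e, y j := by
    rw [Finset.sum_image (fun e1 h1 e2 h2 h12 =>
      Finset.Subset.antisymm (hmem_sub e1 h1 e2 h2 (le_of_eq h12))
        (hmem_sub e2 h2 e1 h1 (le_of_eq h12.symm)))]
    unfold polyValue
    apply Finset.sum_congr rfl
    intro e he
    rw [Finset.prod_image (fun a ha b hb hab => hfinj (hE e he ha) (hE e he hb) hab)]
    exact Finset.prod_congr rfl fun i hi => (hyx i (hE e he hi)).symm
  rw [hval]
  calc ∑ e ∈ E.image (fun e => e.image f), ∏ j ∈ e, y j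
      ≤ ∑ e ∈ (completeHG s r).edges, ∏ j ∈ e, y j := by
        apply Finset.sum_le_sum_of_subset_of_nonneg
        · exact Finset.image_subset_iff.mpr himg_edges
        · intro e _ _
          exact Finset.prod_nonneg fun j _ => hy0 j
    _ ≤ (completeHG s r).lagrangian := UHypergraph.le_lagrangian' _ hyleg

/-- If `G` has `t` vertices and `λ(G) > λ(K_{t-1}^{(r)})`, then `G` is dense. -/
theorem dense_of_lagrangian_gt {r t : ℕ} (G : UHypergraph r)
    (hv : G.verts.card = t)
    (h : (completeHG (t - 1) r).lagrangian < G.lagrangian) : G.Dense := by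
  classical
  have hK0 : 0 ≤ (completeHG (t-1) r).lagrangian := UHypergraph.lagrangian_nonneg' _
  have hG0 : 0 < G.lagrangian := lt_of_le_of_lt hK0 h
  have hGV : G.verts.Nonempty := by
    by_contra hne
    rw [Finset.not_nonempty_iff_eq_empty] at hne
    have hle : G.lagrangian ≤ 0 := by
      apply UHypergraph.lagrangian_le' G le_rfl
      intro x hx
      exfalso
      have hs := hx.2.2
      rw [hne] at hs
      simp at hs
    linarith
  rintro H ⟨⟨hVsub, hEsub⟩, hne⟩
  by_cases hVeq : H.verts = G.verts
  · have hEne : H.edges ≠ G.edges := by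
      rcases hne with h1 | h1
      · exact absurd hVeq h1
      · exact h1
    obtain ⟨e, heG, heH⟩ := Finset.exists_of_ssubset (lt_of_le_of_ne hEsub hEne)
    have hHV : H.verts.Nonempty := hVeq ▸ hGV
    obtain ⟨x, hxleg, hxval⟩ := UHypergraph.exists_isOptimal' H hHV
    by_cases hz : ∃ v ∈ G.verts, x v = 0
    · obtain ⟨v, hvG, hv0⟩ := hz
      have hsplit : UHypergraph.polyValue H.edges x
          = UHypergraph.polyValue (H.edges.filter fun e' => v ∉ e') x := by
        unfold UHypergraph.polyValue
        rw [← Finset.sum_filter_add_sum_filter_not H.edges (fun e' => v ∉ e')]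
        have hzero : ∑ e' ∈ H.edges.filter (fun e' => ¬ v ∉ e'), ∏ i ∈ e', x i = 0 := by
          apply Finset.sum_eq_zero
          intro e' he'
          have hv' : v ∈ e' := by simpa using (Finset.mem_filter.mp he').2
          exact Finset.prod_eq_zero hv' hv0
        rw [hzero, add_zero]
      have hle : UHypergraph.polyValue (H.edges.filter fun e' => v ∉ e') x
          ≤ (completeHG (t-1) r).lagrangian := by
        apply polyValue_le_complete (G.verts.erase v)
        · intro e' he' i hi
          obtain ⟨heH', hv'⟩ := Finset.mem_filter.mp he'
          exact Finset.mem_erase.mpr ⟨fun hiv => hv' (hiv ▸ hi), hVsub (H.edge_sub _ heH' hi)⟩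
        · intro e' he'
          exact H.edge_card _ (Finset.mem_filter.mp he').1
        · exact hxleg.1
        · intro i hi
          by_cases hiv : i = v
          · exact hiv ▸ hv0
          · refine hxleg.2.1 i fun hiH => hi (Finset.mem_erase.mpr ⟨hiv, ?_⟩)
            exact hVeq ▸ hiH
        · rw [Finset.sum_erase_eq_sub hvG, hv0, sub_zero]
          rw [← hVeq]
          exact hxleg.2.2
        · rw [Finset.card_erase_of_mem hvG, hv]
      rw [← hxval]
      calc UHypergraph.polyValue H.edges x
          = UHypergraph.polyValue (H.edges.filter fun e' => v ∉ e') x := hsplit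
        _ ≤ (completeHG (t-1) r).lagrangian := hle
        _ < G.lagrangian := h
    · push_neg at hz
      have hpos : ∀ v ∈ G.verts, 0 < x v :=
        fun v hvG => lt_of_le_of_ne (hxleg.1 v) (Ne.symm (hz v hvG))
      have hxlegG : G.LegalWeighting x := by
        refine ⟨hxleg.1, fun i hi => hxleg.2.1 i (by rw [hVeq]; exact hi), ?_⟩
        rw [← hVeq]
        exact hxleg.2.2
      have h1 : UHypergraph.polyValue G.edges x ≤ G.lagrangian :=
        UHypergraph.le_lagrangian' G hxlegG
      have h2 : UHypergraph.polyValue H.edges x + ∏ i ∈ e, x i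
          ≤ UHypergraph.polyValue G.edges x := by
        unfold UHypergraph.polyValue
        rw [← Finset.sum_sdiff hEsub]
        have hle : ∏ i ∈ e, x i ≤ ∑ e' ∈ G.edges \ H.edges, ∏ i ∈ e', x i :=
          Finset.single_le_sum (f := fun e' => ∏ i ∈ e', x i)
            (fun e' _ => Finset.prod_nonneg fun i _ => hxleg.1 i)
            (Finset.mem_sdiff.mpr ⟨heG, heH⟩)
        linarith
      have h3 : 0 < ∏ i ∈ e, x i :=
        Finset.prod_pos fun i hi => hpos i (G.edge_sub e heG hi)
      rw [← hxval]
      linarith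
  · have hlt : H.verts.card < t := hv ▸ Finset.card_lt_card (lt_of_le_of_ne hVsub hVeq)
    have hle : H.lagrangian ≤ (completeHG (t-1) r).lagrangian := by
      apply UHypergraph.lagrangian_le' H hK0
      intro x hx
      exact polyValue_le_complete H.verts H.edges H.edge_sub H.edge_card hx.1 hx.2.1 hx.2.2
        (by omega)
    linarith
end

section
/- Let r ≥ 3 and t, m be positive integers with m ≥ C(t−1, r) + C(t−2, r−1) + 1. If G is an r-uniform hypergraph on t vertices with m edges containing the complete r-graph on [t−1], then G is dense. -/
lemma sum_powersetCard_insert' {v : ℕ} {S : Finset ℕ} (hv : v ∉ S) (k : ℕ) (x : ℕ → ℝ) :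
    ∑ A ∈ (insert v S).powersetCard (k+1), ∏ i ∈ A, x i
      = (∑ A ∈ S.powersetCard (k+1), ∏ i ∈ A, x i)
        + x v * ∑ A ∈ S.powersetCard k, ∏ i ∈ A, x i := by
  have hdisj : Disjoint (S.powersetCard (k+1)) ((S.powersetCard k).image (insert v)) := by
    rw [Finset.disjoint_left]
    intro A hA hA2
    obtain ⟨B, hB, rfl⟩ := Finset.mem_image.mp hA2
    exact hv ((Finset.mem_powersetCard.mp hA).1 (Finset.mem_insert_self v B))
  rw [Finset.powersetCard_succ_insert hv, Finset.sum_union hdisj]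
  congr 1
  rw [Finset.sum_image, Finset.mul_sum]
  · refine Finset.sum_congr rfl fun A hA => ?_
    exact Finset.prod_insert (fun h => hv ((Finset.mem_powersetCard.mp hA).1 h))
  · intro A hA B hB hAB
    have hvA : v ∉ A := fun h => hv ((Finset.mem_powersetCard.mp hA).1 h)
    have hvB : v ∉ B := fun h => hv ((Finset.mem_powersetCard.mp hB).1 h)
    rw [← Finset.erase_insert hvA, ← Finset.erase_insert hvB, hAB]

lemma poly_ineq (M k : ℕ) (hM : 1 ≤ M) {s a : ℝ} (ha : 0 ≤ a) (has : ((M:ℝ)+1) * a ≤ s) :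
    ((M:ℝ)+1)^(k+2) * ((M.choose (k+2) : ℝ) * (s-a)^(k+2)
        + a * ((M:ℝ) * (M.choose (k+1) : ℝ)) * (s-a)^(k+1))
      ≤ (((M+1).choose (k+2) : ℝ)) * (M:ℝ)^(k+2) * s^(k+2) := by
  have hs : 0 ≤ s := le_trans (by positivity) has
  by_cases hkM : M < k + 1
  · have h1 : M.choose (k+2) = 0 := Nat.choose_eq_zero_of_lt (by omega)
    have h2 : M.choose (k+1) = 0 := Nat.choose_eq_zero_of_lt hkM
    have h3 : (M+1).choose (k+2) = 0 := Nat.choose_eq_zero_of_lt (by omega)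
    simp [h1, h2, h3]
  push_neg at hkM
  have hMpos : (0:ℝ) < (M:ℝ) := by exact_mod_cast hM
  have hM1pos : (0:ℝ) < (M:ℝ)+1 := by linarith
  set c₁ : ℝ := (M.choose (k+2) : ℝ) with hc₁
  set c₂ : ℝ := (M:ℝ) * (M.choose (k+1) : ℝ) with hc₂
  set φ : ℝ → ℝ := fun u => c₁ * (s-u)^(k+2) + u * c₂ * (s-u)^(k+1) with hφ
  have hkey : ((k:ℝ)+2) * c₁ = ((M:ℝ) - ((k:ℝ)+1)) * (M.choose (k+1) : ℝ) := by
    have h := Nat.choose_succ_right_eq M (k+1)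
    have hcast : ((M - (k+1) : ℕ) : ℝ) = (M:ℝ) - ((k:ℝ)+1) := by
      rw [Nat.cast_sub hkM]; push_cast; ring
    have h2 : (M.choose (k+2) : ℝ) * ((k:ℝ)+2) = (M.choose (k+1) : ℝ) * ((M:ℝ) - ((k:ℝ)+1)) := by
      rw [← hcast]; exact_mod_cast congrArg (Nat.cast (R := ℝ)) h
    rw [hc₁]; linarith [h2]
  have hD : ∀ u : ℝ, HasDerivAt φ
      ((((k:ℝ)+1) * (M.choose (k+1):ℝ)) * (s-u)^k * (s - ((M:ℝ)+1)*u)) u := by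
    intro u
    have h0 : HasDerivAt (fun u : ℝ => s - u) (-1) u := (hasDerivAt_id u).const_sub s
    have h1 : HasDerivAt (fun u : ℝ => (s-u)^(k+2)) (((k:ℝ)+2) * (s-u)^(k+1) * (-1)) u := by
      simpa using h0.fun_pow (k+2)
    have h2 : HasDerivAt (fun u : ℝ => (s-u)^(k+1)) (((k:ℝ)+1) * (s-u)^k * (-1)) u := by
      simpa using h0.fun_pow (k+1)
    have h3 := (h1.const_mul c₁).add (((hasDerivAt_id u).mul_const c₂).mul h2)
    refine h3.congr_deriv ?_
    symm
    rw [hc₂]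
    simp only [id]
    have e2 : (s-u)^(k+1) = (s-u)^k*(s-u) := by ring
    rw [e2]
    linear_combination ((s-u)^k * (s-u)) * hkey
  have hmono : MonotoneOn φ (Set.Icc 0 (s/((M:ℝ)+1))) := by
    apply monotoneOn_of_deriv_nonneg (convex_Icc _ _)
    · exact Continuous.continuousOn (by fun_prop)
    · intro u hu
      exact (hD u).differentiableAt.differentiableWithinAt
    · intro u hu
      rw [interior_Icc, Set.mem_Ioo] at hu
      rw [(hD u).deriv]
      have h1 : u * ((M:ℝ)+1) < s := (lt_div_iff₀ hM1pos).mp hu.2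
      have h2 : 0 ≤ s - ((M:ℝ)+1)*u := by linarith
      have h3 : 0 ≤ s - u := by nlinarith [hu.1]
      positivity
  have hmem : a ∈ Set.Icc 0 (s/((M:ℝ)+1)) := ⟨ha, (le_div_iff₀ hM1pos).mpr (by linarith)⟩
  have hend : s/((M:ℝ)+1) ∈ Set.Icc 0 (s/((M:ℝ)+1)) := ⟨by positivity, le_refl _⟩
  have hle : φ a ≤ φ (s/((M:ℝ)+1)) := hmono hmem hend hmem.2
  have hval : ((M:ℝ)+1)^(k+2) * φ (s/((M:ℝ)+1))
      = (((M+1).choose (k+2) : ℝ)) * (M:ℝ)^(k+2) * s^(k+2) := by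
    have hch : (((M+1).choose (k+2)) : ℝ) = (M.choose (k+1) : ℝ) + (M.choose (k+2) : ℝ) := by
      rw [Nat.choose_succ_succ (M) (k+1)]; push_cast; ring
    rw [hφ, hch, hc₁, hc₂]
    have hs' : s - s/((M:ℝ)+1) = s * (M:ℝ) / ((M:ℝ)+1) := by field_simp; ring
    simp only [hs']
    rw [div_pow, div_pow]
    field_simp
    ring
  calc ((M:ℝ)+1)^(k+2) * (c₁ * (s-a)^(k+2) + a * c₂ * (s-a)^(k+1))
      = ((M:ℝ)+1)^(k+2) * φ a := by rw [hφ]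
    _ ≤ ((M:ℝ)+1)^(k+2) * φ (s/((M:ℝ)+1)) := by
        apply mul_le_mul_of_nonneg_left hle (by positivity)
    _ = _ := hval

lemma sum_powersetCard_one (S : Finset ℕ) (x : ℕ → ℝ) :
    ∑ A ∈ S.powersetCard 1, ∏ i ∈ A, x i = ∑ i ∈ S, x i := by
  rw [Finset.powersetCard_one, Finset.sum_map]
  simp


lemma maclaurin : ∀ (n r : ℕ), 1 ≤ r → ∀ (S : Finset ℕ), S.card = n → ∀ (x : ℕ → ℝ),
    (∀ i ∈ S, 0 ≤ x i) →
    (n:ℝ)^r * ∑ A ∈ S.powersetCard r, ∏ i ∈ A, x i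
      ≤ (n.choose r : ℝ) * (∑ i ∈ S, x i)^r := by
  intro n
  induction n with
  | zero =>
    intro r hr S hS x hx
    obtain ⟨k, rfl⟩ : ∃ k, r = k + 1 := ⟨r - 1, by omega⟩
    have hSe : S = ∅ := Finset.card_eq_zero.mp hS
    subst hSe
    simp [Nat.choose_eq_zero_of_lt (by omega : 0 < k + 1)]
  | succ n IH =>
    intro r hr S hS x hx
    have hne : S.Nonempty := Finset.card_pos.mp (by omega)
    obtain ⟨v, hvS, hvmin⟩ := S.exists_min_image x hne
    have hvS' : v ∉ S.erase v := Finset.notMem_erase v S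
    have hS' : (S.erase v).card = n := by rw [Finset.card_erase_of_mem hvS, hS]; omega
    have hins : insert v (S.erase v) = S := Finset.insert_erase hvS
    obtain ⟨k, rfl⟩ : ∃ k, r = k + 1 := ⟨r - 1, by omega⟩
    have hsplit : ∑ A ∈ S.powersetCard (k+1), ∏ i ∈ A, x i
        = (∑ A ∈ (S.erase v).powersetCard (k+1), ∏ i ∈ A, x i)
          + x v * ∑ A ∈ (S.erase v).powersetCard k, ∏ i ∈ A, x i := by
      rw [← hins]; rw [sum_powersetCard_insert' hvS' k x]
      rw [Finset.erase_insert hvS']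
    have hsum : ∑ i ∈ S, x i = x v + ∑ i ∈ S.erase v, x i :=
      (Finset.add_sum_erase S x hvS).symm
    set s := ∑ i ∈ S, x i with hsdef
    set a := x v with hadef
    have hs' : ∑ i ∈ S.erase v, x i = s - a := by rw [hsum]; ring
    have ha : 0 ≤ a := hx v hvS
    have hna : ((n:ℝ)+1) * a ≤ s := by
      have h := Finset.card_nsmul_le_sum S x a (fun i hi => hvmin i hi)
      rw [hS] at h
      push_cast at h ⊢
      simpa [nsmul_eq_mul] using h
    have hsa : 0 ≤ s := le_trans (by positivity) hna
    rcases Nat.eq_zero_or_pos k with hk | hk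
    · subst hk
      rw [sum_powersetCard_one, Nat.choose_one_right]
      push_cast
      rw [pow_one, pow_one]
    · obtain ⟨k', rfl⟩ : ∃ k', k = k' + 1 := ⟨k - 1, by omega⟩
      rcases Nat.eq_zero_or_pos n with hn | hn
      · subst hn
        have hS'e : S.erase v = ∅ := Finset.card_eq_zero.mp hS'
        have hz : ∑ A ∈ S.powersetCard (k'+2), ∏ i ∈ A, x i = 0 := by
          rw [hsplit, hS'e]
          rw [Finset.powersetCard_eq_empty.mpr (by simp), Finset.powersetCard_eq_empty.mpr (by simp)]
          simp
        rw [hz, mul_zero]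
        positivity
      · have hx' : ∀ i ∈ S.erase v, 0 ≤ x i := fun i hi => hx i (Finset.mem_of_mem_erase hi)
        have IH1 := IH (k'+2) (by omega) (S.erase v) hS' x hx'
        have IH2 := IH (k'+1) (by omega) (S.erase v) hS' x hx'
        rw [hs'] at IH1 IH2
        have key := poly_ineq n k' hn ha hna
        have hE1 : 0 ≤ ∑ A ∈ (S.erase v).powersetCard (k'+2), ∏ i ∈ A, x i :=
          Finset.sum_nonneg fun A hA => Finset.prod_nonneg fun i hi =>
            hx' i ((Finset.mem_powersetCard.mp hA).1 hi)
        have hE2 : 0 ≤ ∑ A ∈ (S.erase v).powersetCard (k'+1), ∏ i ∈ A, x i :=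
          Finset.sum_nonneg fun A hA => Finset.prod_nonneg fun i hi =>
            hx' i ((Finset.mem_powersetCard.mp hA).1 hi)
        set E₁ := ∑ A ∈ (S.erase v).powersetCard (k'+2), ∏ i ∈ A, x i
        set E₂ := ∑ A ∈ (S.erase v).powersetCard (k'+1), ∏ i ∈ A, x i
        rw [hsplit]
        have hnpos : (0:ℝ) < (n:ℝ)^(k'+2) := by positivity
        rw [← mul_le_mul_iff_of_pos_left hnpos]
        push_cast
        calc (n:ℝ)^(k'+2) * (((n:ℝ)+1)^(k'+2) * (E₁ + a * E₂))
            = ((n:ℝ)+1)^(k'+2) * ((n:ℝ)^(k'+2) * E₁)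
              + (((n:ℝ)+1)^(k'+2) * (a * (n:ℝ))) * ((n:ℝ)^(k'+1) * E₂) := by ring
          _ ≤ ((n:ℝ)+1)^(k'+2) * ((n.choose (k'+2) : ℝ) * (s-a)^(k'+2))
              + (((n:ℝ)+1)^(k'+2) * (a * (n:ℝ))) * ((n.choose (k'+1) : ℝ) * (s-a)^(k'+1)) := by
              gcongr <;> positivity
          _ = ((n:ℝ)+1)^(k'+2) * ((n.choose (k'+2) : ℝ) * (s-a)^(k'+2)
              + a * ((n:ℝ) * (n.choose (k'+1) : ℝ)) * (s-a)^(k'+1)) := by ring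
          _ ≤ (((n+1).choose (k'+2) : ℝ)) * (n:ℝ)^(k'+2) * s^(k'+2) := key
          _ = (n:ℝ)^(k'+2) * (((n+1).choose (k'+2) : ℝ) * s^(k'+2)) := by ring

lemma UHypergraph.legal_le_one {r : ℕ} (G : UHypergraph r) {x : ℕ → ℝ}
    (hx : G.LegalWeighting x) (i : ℕ) : x i ≤ 1 := by
  by_cases hi : i ∈ G.verts
  · calc x i ≤ ∑ j ∈ G.verts, x j := Finset.single_le_sum (fun j _ => hx.1 j) hi
      _ = 1 := hx.2.2
  · rw [hx.2.1 i hi]; norm_num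


lemma UHypergraph.lagrangian_bddAbove {r : ℕ} (G : UHypergraph r) :
    BddAbove {l : ℝ | ∃ x, G.LegalWeighting x ∧ l = UHypergraph.polyValue G.edges x} := by
  refine ⟨(G.edges.card : ℝ), fun l hl => ?_⟩
  obtain ⟨x, hx, rfl⟩ := hl
  unfold UHypergraph.polyValue
  calc ∑ e ∈ G.edges, ∏ i ∈ e, x i ≤ ∑ e ∈ G.edges, 1 := by
        refine Finset.sum_le_sum fun e he => ?_
        exact Finset.prod_le_one (fun i _ => hx.1 i) (fun i _ => G.legal_le_one hx i)
    _ = G.edges.card := by simp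


lemma UHypergraph.le_lagrangian {r : ℕ} (G : UHypergraph r) {x : ℕ → ℝ}
    (hx : G.LegalWeighting x) : UHypergraph.polyValue G.edges x ≤ G.lagrangian :=
  le_csSup G.lagrangian_bddAbove ⟨x, hx, rfl⟩

set_option maxHeartbeats 1000000 in
/-- If `r ≥ 3`, `m ≥ C(t-1,r) + C(t-2,r-1) + 1`, and `G` is an `r`-graph on `[t]`
with `m` edges containing the complete `r`-graph on `[t-1]`, then `G` is dense. -/
theorem dense_of_contains_clique {r t m : ℕ} (hr : 3 ≤ r) (ht : 0 < t)
    (hm : (t - 1).choose r + (t - 2).choose (r - 1) + 1 ≤ m)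
    (G : UHypergraph r) (hv : G.verts = Finset.Icc 1 t) (he : G.edges.card = m)
    (hsub : (completeHG (t - 1) r).edges ⊆ G.edges) : G.Dense := by
  classical
  have hedges_sub : G.edges ⊆ (Finset.Icc 1 t).powersetCard r := fun e heG =>
    Finset.mem_powersetCard.mpr ⟨hv ▸ G.edge_sub e heG, G.edge_card e heG⟩
  have hIcc_card : (Finset.Icc 1 t).card = t := by rw [Nat.card_Icc]; omega
  have hm_le : m ≤ t.choose r := by
    rw [← he]
    calc G.edges.card ≤ ((Finset.Icc 1 t).powersetCard r).card :=
          Finset.card_le_card hedges_sub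
      _ = t.choose r := by rw [Finset.card_powersetCard, hIcc_card]
  have htr : r ≤ t := by
    by_contra hcon
    push_neg at hcon
    rw [Nat.choose_eq_zero_of_lt hcon] at hm_le
    omega
  set N : ℕ := t - 1 with hN
  have hN2 : 2 ≤ N := by omega
  have ht1 : t = N + 1 := by omega
  have hNR2 : (2:ℝ) ≤ (N:ℝ) := by exact_mod_cast hN2
  have hNRpos : (0:ℝ) < (N:ℝ) := by linarith
  have hrR : (2:ℝ) ≤ (r:ℝ) - 1 := by
    have h3 : (3:ℝ) ≤ (r:ℝ) := by exact_mod_cast hr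
    linarith
  set DR : ℝ := ((t-2).choose (r-1) : ℝ) with hDRdef
  have hDR0 : 0 ≤ DR := Nat.cast_nonneg _
  set CR : ℝ := (N.choose r : ℝ) with hCRdef
  have hCR0 : 0 ≤ CR := Nat.cast_nonneg _
  set ε : ℝ := 1/(2*(DR+1)*((r:ℝ)-1)) with hεdef
  have hε0 : 0 < ε := by rw [hεdef]; positivity
  have hε_eq : ε * (2*(DR+1)*((r:ℝ)-1)) = 1 := by
    rw [hεdef]; field_simp
  have hε1 : ε ≤ 1/2 := by
    rw [hεdef, div_le_div_iff₀ (by positivity) (by norm_num)]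
    nlinarith
  set q : ℝ := (1-ε)/(N:ℝ) with hqdef
  have hq0 : 0 ≤ q := by
    rw [hqdef]; apply div_nonneg; linarith; linarith
  have hrelN : N * ((t-2).choose (r-1)) = (N.choose r) * r := by
    have h := Nat.add_one_mul_choose_eq (t-2) (r-1)
    have h1 : t - 2 + 1 = N := by omega
    have h2 : r - 1 + 1 = r := by omega
    rw [h1, h2] at h
    exact h
  have hrel : (r:ℝ) * CR = (N:ℝ) * DR := by
    have hc := congrArg (Nat.cast (R := ℝ)) hrelN
    push_cast at hc
    rw [hCRdef, hDRdef]
    push_cast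
    linarith
  -- the weighting
  set w : ℕ → ℝ := fun i => if i ∈ Finset.Icc 1 N then q else if i = t then ε else 0 with hwdef
  have htnotin : t ∉ Finset.Icc 1 N := by simp [Finset.mem_Icc]; omega
  have hwt : w t = ε := by
    rw [hwdef]; simp [htnotin]
  have hwq : ∀ i ∈ Finset.Icc 1 N, w i = q := by
    intro i hi; rw [hwdef]; simp only [if_pos hi]
  have hw0 : ∀ i, 0 ≤ w i := by
    intro i; rw [hwdef]; dsimp only
    split
    · exact hq0
    · split
      · linarith
      · exact le_refl 0
  have hIccsplit : Finset.Icc 1 t = insert t (Finset.Icc 1 N) := by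
    ext i; simp only [Finset.mem_Icc, Finset.mem_insert]; omega
  have hlegal : G.LegalWeighting w := by
    refine ⟨hw0, ?_, ?_⟩
    · intro i hi
      rw [hv, hIccsplit] at hi
      rw [hwdef]; dsimp only
      rw [if_neg (fun h => hi (Finset.mem_insert_of_mem h)),
        if_neg (fun h => hi (by rw [h]; exact Finset.mem_insert_self _ _))]
    · rw [hv, hIccsplit, Finset.sum_insert htnotin, hwt,
        Finset.sum_congr rfl (fun i hi => hwq i hi), Finset.sum_const, Nat.card_Icc,
        Nat.add_sub_cancel, nsmul_eq_mul, hqdef]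
      field_simp
      ring
  -- edge partition
  set E₂ : Finset (Finset ℕ) := G.edges.filter (fun e => t ∈ e) with hE₂
  set E₁ : Finset (Finset ℕ) := G.edges.filter (fun e => ¬ t ∈ e) with hE₁
  have hcompl : (completeHG N r).edges = (Finset.Icc 1 N).powersetCard r := rfl
  have hE₁eq : E₁ = (completeHG N r).edges := by
    rw [hcompl]
    ext e
    simp only [hE₁, Finset.mem_filter]
    constructor
    · rintro ⟨heG, hte⟩
      refine Finset.mem_powersetCard.mpr ⟨?_, G.edge_card e heG⟩
      intro i hi
      have h1 := (hv ▸ G.edge_sub e heG) hi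
      rw [Finset.mem_Icc] at h1 ⊢
      have hit : i ≠ t := fun h => hte (h ▸ hi)
      omega
    · intro hce
      have h1 : e ⊆ Finset.Icc 1 N := (Finset.mem_powersetCard.mp hce).1
      exact ⟨hsub (hcompl ▸ hce), fun hte => htnotin (h1 hte)⟩
  have hE₁card : E₁.card = N.choose r := by
    rw [hE₁eq, hcompl, Finset.card_powersetCard, Nat.card_Icc, Nat.add_sub_cancel]
  have hcards : E₂.card + E₁.card = m := by
    rw [hE₂, hE₁, ← he]
    exact Finset.card_filter_add_card_filter_not (fun e => t ∈ e)
  have hE₂card : (t-2).choose (r-1) + 1 ≤ E₂.card := by omega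
  have hprodE₁ : ∀ e ∈ E₁, ∏ i ∈ e, w i = q^r := by
    intro e heE
    rw [hE₁eq, hcompl] at heE
    have h1 : e ⊆ Finset.Icc 1 N := (Finset.mem_powersetCard.mp heE).1
    have h2 : e.card = r := (Finset.mem_powersetCard.mp heE).2
    rw [Finset.prod_congr rfl (fun i hi => hwq i (h1 hi)), Finset.prod_const, h2]
  have hprodE₂ : ∀ e ∈ E₂, ∏ i ∈ e, w i = ε * q^(r-1) := by
    intro e heE
    rw [hE₂, Finset.mem_filter] at heE
    obtain ⟨heG, hte⟩ := heE
    rw [← Finset.mul_prod_erase e w hte, hwt]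
    congr 1
    have hsubN : e.erase t ⊆ Finset.Icc 1 N := by
      intro i hi
      have hit : i ≠ t := Finset.ne_of_mem_erase hi
      have h1 := (hv ▸ G.edge_sub e heG) (Finset.mem_of_mem_erase hi)
      rw [Finset.mem_Icc] at h1 ⊢
      omega
    rw [Finset.prod_congr rfl (fun i hi => hwq i (hsubN hi)), Finset.prod_const,
      Finset.card_erase_of_mem hte, G.edge_card e heG]
  have hpolyw : UHypergraph.polyValue G.edges w
      = (E₂.card : ℝ) * (ε * q^(r-1)) + CR * q^r := by
    unfold UHypergraph.polyValue
    rw [← Finset.sum_filter_add_sum_filter_not G.edges (fun e => t ∈ e) (fun e => ∏ i ∈ e, w i)]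
    rw [← hE₂, ← hE₁]
    rw [Finset.sum_congr rfl hprodE₂, Finset.sum_congr rfl hprodE₁,
      Finset.sum_const, Finset.sum_const, hE₁card, nsmul_eq_mul, nsmul_eq_mul, hCRdef]
  -- the key analytic estimate
  set c : ℝ := CR / (N:ℝ)^r with hcdef
  set β : ℝ := ε / (2 * (N:ℝ)^(r-1)) with hβdef
  have hβ0 : 0 < β := by rw [hβdef]; positivity
  have hc0 : 0 ≤ c := by rw [hcdef]; positivity
  have hkeyval : c + β ≤ UHypergraph.polyValue G.edges w := by
    rw [hpolyw]
    have hDE : DR + 1 ≤ (E₂.card : ℝ) := by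
      rw [hDRdef]
      exact_mod_cast hE₂card
    have step1 : (DR+1) * (ε * q^(r-1)) + CR * q^r
        ≤ (E₂.card : ℝ) * (ε * q^(r-1)) + CR * q^r := by
      have : 0 ≤ ε * q^(r-1) := by positivity
      nlinarith
    refine le_trans ?_ step1
    obtain ⟨k, hk⟩ : ∃ k, r = k + 3 := ⟨r - 3, by omega⟩
    have hr1 : r - 1 = k + 2 := by omega
    rw [hcdef, hβdef, hqdef, hr1, hk]
    have hεa : (DR+1) * ((k:ℝ)+2) * ε = 1/2 := by
      rw [hk] at hε_eq
      push_cast at hε_eq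
      linear_combination hε_eq / 2
    have hrel' : ((k:ℝ)+3) * CR = (N:ℝ) * DR := by
      rw [hk] at hrel
      push_cast at hrel
      linarith
    have b1 : 1 - ((k:ℝ)+3)*ε ≤ (1-ε)^(k+3) := by
      have h := one_add_mul_le_pow (show (-2:ℝ) ≤ -ε by linarith) (k+3)
      push_cast at h
      calc 1 - ((k:ℝ)+3)*ε = 1 + ((k:ℝ)+3)*(-ε) := by ring
        _ ≤ (1 + -ε)^(k+3) := h
        _ = (1-ε)^(k+3) := by ring_nf
    have b2 : 1 - ((k:ℝ)+2)*ε ≤ (1-ε)^(k+2) := by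
      have h := one_add_mul_le_pow (show (-2:ℝ) ≤ -ε by linarith) (k+2)
      push_cast at h
      calc 1 - ((k:ℝ)+2)*ε = 1 + ((k:ℝ)+2)*(-ε) := by ring
        _ ≤ (1 + -ε)^(k+2) := h
        _ = (1-ε)^(k+2) := by ring_nf
    have T1 : CR*(1 - ((k:ℝ)+3)*ε) ≤ CR*(1-ε)^(k+3) :=
      mul_le_mul_of_nonneg_left b1 hCR0
    have T2 : ((DR+1)*ε*(N:ℝ))*(1 - ((k:ℝ)+2)*ε) ≤ ((DR+1)*ε*(N:ℝ))*(1-ε)^(k+2) :=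
      mul_le_mul_of_nonneg_left b2 (by positivity)
    have E : CR*(1 - ((k:ℝ)+3)*ε) + ((DR+1)*ε*(N:ℝ))*(1 - ((k:ℝ)+2)*ε)
        = CR + ε*(N:ℝ)/2 := by
      linear_combination (-ε)*hrel' + (-((N:ℝ)*ε))*hεa
    have H : CR + ε*(N:ℝ)/2 ≤ CR*(1-ε)^(k+3) + ((DR+1)*ε*(N:ℝ))*(1-ε)^(k+2) := by
      linarith
    have hNpow : (0:ℝ) < (N:ℝ)^(k+3) := by positivity
    have lhs_eq : CR/(N:ℝ)^(k+3) + ε/(2*(N:ℝ)^(k+2))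
        = (CR + ε*(N:ℝ)/2)/(N:ℝ)^(k+3) := by
      field_simp
      ring
    have rhs_eq : (DR+1) * (ε * ((1-ε)/(N:ℝ))^(k+2)) + CR * ((1-ε)/(N:ℝ))^(k+3)
        = (CR*(1-ε)^(k+3) + ((DR+1)*ε*(N:ℝ))*(1-ε)^(k+2))/(N:ℝ)^(k+3) := by
      rw [div_pow, div_pow]
      field_simp
      ring
    rw [lhs_eq, rhs_eq]
    exact (div_le_div_iff_of_pos_right hNpow).mpr H
  have hlagG : c + β ≤ G.lagrangian :=
    le_trans hkeyval (G.le_lagrangian hlegal)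
  have hcover : ∀ v ∈ G.verts, ∃ e ∈ G.edges, v ∈ e := by
    intro v hvv
    by_contra hcon
    push_neg at hcon
    have hsubE : G.edges ⊆ ((Finset.Icc 1 t).erase v).powersetCard r := by
      intro e heG
      refine Finset.mem_powersetCard.mpr ⟨?_, G.edge_card e heG⟩
      intro i hi
      refine Finset.mem_erase.mpr ⟨?_, (hv ▸ G.edge_sub e heG) hi⟩
      rintro rfl
      exact hcon e heG hi
    have hcard2 : m ≤ N.choose r := by
      rw [← he]
      calc G.edges.card ≤ (((Finset.Icc 1 t).erase v).powersetCard r).card :=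
            Finset.card_le_card hsubE
        _ = N.choose r := by
            rw [Finset.card_powersetCard, Finset.card_erase_of_mem (hv ▸ hvv), hIcc_card]
    omega
  -- the Dense argument
  intro H hH
  obtain ⟨⟨hVsub, hEsub⟩, hne⟩ := hH
  by_cases hEeq : H.edges = G.edges
  · exfalso
    have hVne : H.verts ≠ G.verts := by
      rcases hne with h | h
      · exact h
      · exact absurd hEeq h
    obtain ⟨u, huG, huH⟩ := Finset.exists_of_ssubset (lt_of_le_of_ne hVsub hVne)
    obtain ⟨e, heG, hue⟩ := hcover u huG
    exact huH (H.edge_sub e (hEeq ▸ heG) hue)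
  · obtain ⟨e₀, he₀G, he₀H⟩ := Finset.exists_of_ssubset (lt_of_le_of_ne hEsub hEeq)
    set K : ℝ := (N.choose (r-1) : ℝ) with hKdef
    have hK0 : 0 ≤ K := Nat.cast_nonneg _
    set δ : ℝ := β / (2*(K+1)) with hδdef
    have hδ0 : 0 < δ := by rw [hδdef]; positivity
    set γ : ℝ := min (δ^r) (β/2) with hγdef
    have hγ0 : 0 < γ := lt_min (by positivity) (by linarith)
    have hγβ : γ ≤ β/2 := min_le_right _ _
    have hγδ : γ ≤ δ^r := min_le_left _ _
    have hδK : δ * K ≤ β / 2 := by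
      have h2K : δ * (2*(K+1)) = β := by
        rw [hδdef]; field_simp
      nlinarith [hδ0.le, hK0]
    have hbound : ∀ l ∈ {l : ℝ | ∃ x, H.LegalWeighting x ∧ l = UHypergraph.polyValue H.edges x},
        l ≤ G.lagrangian - γ := by
      rintro l ⟨x, hx, rfl⟩
      have hx0 : ∀ i, 0 ≤ x i := hx.1
      have hxG : G.LegalWeighting x := by
        refine ⟨hx0, fun i hi => hx.2.1 i (fun h => hi (hVsub h)), ?_⟩
        rw [← Finset.sum_subset hVsub (fun i hiG hiH => hx.2.1 i hiH)]
        exact hx.2.2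
      have hpG : UHypergraph.polyValue G.edges x ≤ G.lagrangian := G.le_lagrangian hxG
      have hx1 : ∀ i, x i ≤ 1 := G.legal_le_one hxG
      by_cases hδx : ∀ i ∈ e₀, δ ≤ x i
      · have hprod : δ^r ≤ ∏ i ∈ e₀, x i := by
          calc δ^r = ∏ _i ∈ e₀, δ := by rw [Finset.prod_const, G.edge_card e₀ he₀G]
            _ ≤ ∏ i ∈ e₀, x i := Finset.prod_le_prod (fun i _ => hδ0.le) hδx
        have hsum : UHypergraph.polyValue H.edges x + δ^r ≤ UHypergraph.polyValue G.edges x := by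
          unfold UHypergraph.polyValue
          calc (∑ e ∈ H.edges, ∏ i ∈ e, x i) + δ^r
              ≤ (∑ e ∈ H.edges, ∏ i ∈ e, x i) + ∏ i ∈ e₀, x i := by linarith
            _ = ∑ e ∈ insert e₀ H.edges, ∏ i ∈ e, x i := by
                rw [Finset.sum_insert he₀H]; ring
            _ ≤ ∑ e ∈ G.edges, ∏ i ∈ e, x i :=
                Finset.sum_le_sum_of_subset_of_nonneg
                  (Finset.insert_subset he₀G hEsub)
                  (fun e _ _ => Finset.prod_nonneg fun i _ => hx0 i)
        linarith
      · push_neg at hδx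
        obtain ⟨u, hue₀, hxu⟩ := hδx
        have huIcc : u ∈ Finset.Icc 1 t := hv ▸ G.edge_sub e₀ he₀G hue₀
        have hT'card : ((Finset.Icc 1 t).erase u).card = N := by
          rw [Finset.card_erase_of_mem huIcc, hIcc_card]
        have huT' : u ∉ (Finset.Icc 1 t).erase u := Finset.notMem_erase u _
        have hinsT' : insert u ((Finset.Icc 1 t).erase u) = Finset.Icc 1 t :=
          Finset.insert_erase huIcc
        obtain ⟨k, hk⟩ : ∃ k, r = k + 1 := ⟨r - 1, by omega⟩
        have hb1 : UHypergraph.polyValue H.edges x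
            ≤ ∑ A ∈ (Finset.Icc 1 t).powersetCard r, ∏ i ∈ A, x i := by
          unfold UHypergraph.polyValue
          exact Finset.sum_le_sum_of_subset_of_nonneg
            (fun e heH => hedges_sub (hEsub heH))
            (fun e _ _ => Finset.prod_nonneg fun i _ => hx0 i)
        have hsplit2 : ∑ A ∈ (Finset.Icc 1 t).powersetCard r, ∏ i ∈ A, x i
            = (∑ A ∈ ((Finset.Icc 1 t).erase u).powersetCard r, ∏ i ∈ A, x i)
              + x u * ∑ A ∈ ((Finset.Icc 1 t).erase u).powersetCard k, ∏ i ∈ A, x i := by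
          conv_lhs => rw [← hinsT', hk]
          rw [sum_powersetCard_insert' huT' k x, ← hk]
        have hsT' : ∑ i ∈ (Finset.Icc 1 t).erase u, x i ≤ 1 := by
          have h2 := Finset.sum_le_sum_of_subset_of_nonneg
            (Finset.erase_subset u (Finset.Icc 1 t)) (fun i _ _ => hx0 i)
          have h3 : ∑ i ∈ Finset.Icc 1 t, x i = 1 := by rw [← hv]; exact hxG.2.2
          linarith
        have hsT'0 : (0:ℝ) ≤ ∑ i ∈ (Finset.Icc 1 t).erase u, x i :=
          Finset.sum_nonneg fun i _ => hx0 i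
        have hpart1 : ∑ A ∈ ((Finset.Icc 1 t).erase u).powersetCard r, ∏ i ∈ A, x i ≤ c := by
          have hmac := maclaurin N r (by omega) ((Finset.Icc 1 t).erase u) hT'card x
            (fun i _ => hx0 i)
          have hpow1 : (∑ i ∈ (Finset.Icc 1 t).erase u, x i)^r ≤ 1 :=
            pow_le_one₀ hsT'0 hsT'
          have hNrpos : (0:ℝ) < (N:ℝ)^r := by positivity
          rw [hcdef, hCRdef, le_div_iff₀ hNrpos]
          calc (∑ A ∈ ((Finset.Icc 1 t).erase u).powersetCard r, ∏ i ∈ A, x i) * (N:ℝ)^r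
              = (N:ℝ)^r * ∑ A ∈ ((Finset.Icc 1 t).erase u).powersetCard r, ∏ i ∈ A, x i := by
                ring
            _ ≤ (N.choose r : ℝ) * (∑ i ∈ (Finset.Icc 1 t).erase u, x i)^r := hmac
            _ ≤ (N.choose r : ℝ) * 1 := by
                have : (0:ℝ) ≤ (N.choose r : ℝ) := Nat.cast_nonneg _
                nlinarith
            _ = (N.choose r : ℝ) := mul_one _
        have hpart2 : x u * ∑ A ∈ ((Finset.Icc 1 t).erase u).powersetCard k, ∏ i ∈ A, x i
            ≤ δ * K := by
          have hS2 : ∑ A ∈ ((Finset.Icc 1 t).erase u).powersetCard k, ∏ i ∈ A, x i ≤ K := by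
            calc ∑ A ∈ ((Finset.Icc 1 t).erase u).powersetCard k, ∏ i ∈ A, x i
                ≤ ∑ _A ∈ ((Finset.Icc 1 t).erase u).powersetCard k, (1:ℝ) :=
                  Finset.sum_le_sum fun A _ =>
                    Finset.prod_le_one (fun i _ => hx0 i) (fun i _ => hx1 i)
              _ = ((((Finset.Icc 1 t).erase u).powersetCard k).card : ℝ) := by simp
              _ = K := by
                  rw [Finset.card_powersetCard, hT'card, hKdef]
                  congr 2
                  omega
          have hS20 : (0:ℝ) ≤ ∑ A ∈ ((Finset.Icc 1 t).erase u).powersetCard k, ∏ i ∈ A, x i :=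
            Finset.sum_nonneg fun A hA => Finset.prod_nonneg fun i _ => hx0 i
          calc x u * ∑ A ∈ ((Finset.Icc 1 t).erase u).powersetCard k, ∏ i ∈ A, x i
              ≤ δ * ∑ A ∈ ((Finset.Icc 1 t).erase u).powersetCard k, ∏ i ∈ A, x i :=
                mul_le_mul_of_nonneg_right hxu.le hS20
            _ ≤ δ * K := mul_le_mul_of_nonneg_left hS2 hδ0.le
        have hfin : UHypergraph.polyValue H.edges x ≤ c + δ * K := by
          rw [hsplit2] at hb1
          linarith
        linarith
    have hH0 : (0:ℝ) ≤ G.lagrangian - γ := by linarith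
    have hHle : H.lagrangian ≤ G.lagrangian - γ := by
      unfold UHypergraph.lagrangian
      exact Real.sSup_le hbound hH0
    linarith
end
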